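/- Let a,b,c,t be complex numbers and define 𝐚(t) = (1/3)[e^{t(a+b+c)} + e^{t(a+bω+cω²)} + e^{t(a+bω²+cω)}], 𝐛(t) = (1/3)[e^{t(a+b+c)} + ω²e^{t(a+bω+cω²)} + ω e^{t(a+bω²+cω)}], 𝐜(t) = (1/3)[e^{t(a+b+c)} + ω e^{t(a+bω+cω²)} + ω² e^{t(a+bω²+cω)}], with ω a primitive cube root of unity. Then exp(t·D(a,b,c)) = D(𝐚(t), 𝐛(t), 𝐜(t)). -/

import Mathlib

open Matrix

/-- The 3×3 circulant matrix with rows (a,b,c), (c,a,b), (b,c,a). -/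
def Dm (a b c : ℂ) : Matrix (Fin 3) (Fin 3) ℂ := !![a, b, c; c, a, b; b, c, a]

/-- A primitive cube root of unity. -/
noncomputable def ω : ℂ := Complex.exp (2 * Real.pi * Complex.I / 3)

noncomputable def af (a b c t : ℂ) : ℂ :=
  (1 / 3) * (Complex.exp (t * (a + b + c)) + Complex.exp (t * (a + b * ω + c * ω ^ 2))
    + Complex.exp (t * (a + b * ω ^ 2 + c * ω)))

noncomputable def bf (a b c t : ℂ) : ℂ :=
  (1 / 3) * (Complex.exp (t * (a + b + c)) + ω ^ 2 * Complex.exp (t * (a + b * ω + c * ω ^ 2))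
    + ω * Complex.exp (t * (a + b * ω ^ 2 + c * ω)))

noncomputable def cf (a b c t : ℂ) : ℂ :=
  (1 / 3) * (Complex.exp (t * (a + b + c)) + ω * Complex.exp (t * (a + b * ω + c * ω ^ 2))
    + ω ^ 2 * Complex.exp (t * (a + b * ω ^ 2 + c * ω)))

lemma hprim : IsPrimitiveRoot ω 3 := by
  have := Complex.isPrimitiveRoot_exp 3 (by norm_num)
  simpa [ω] using this

lemma hω3 : ω ^ 3 = 1 := hprim.pow_eq_one

lemma hsum : 1 + ω + ω ^ 2 = 0 := by
  have hne : ω ≠ 1 := hprim.ne_one (by norm_num)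
  have h : (ω - 1) * (1 + ω + ω ^ 2) = 0 := by linear_combination hω3
  rcases mul_eq_zero.mp h with h | h
  · exact absurd (sub_eq_zero.mp h) hne
  · exact h

lemma hω2 : ω ^ 2 = -1 - ω := by linear_combination hsum

lemma hω6 : ω ^ 6 = 1 := by
  rw [show (6:ℕ) = 3 * 2 from rfl, pow_mul, hω3, one_pow]

lemma hω4 : ω ^ 4 = ω := by
  rw [show (4:ℕ) = 3 + 1 from rfl, pow_succ, hω3, one_mul]

lemma hω5 : ω ^ 5 = ω ^ 2 := by
  rw [show (5:ℕ) = 3 + 2 from rfl, pow_add, hω3, one_mul]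

noncomputable def P : Matrix (Fin 3) (Fin 3) ℂ := !![1, 1, 1; 1, ω, ω ^ 2; 1, ω ^ 2, ω]

noncomputable def Q : Matrix (Fin 3) (Fin 3) ℂ :=
  !![1/3, 1/3, 1/3; 1/3, ω ^ 2 / 3, ω / 3; 1/3, ω / 3, ω ^ 2 / 3]

lemma hPQ : P * Q = 1 := by
  ext i j
  fin_cases i <;> fin_cases j <;>
    simp [P, Q, Matrix.mul_apply, Fin.sum_univ_three, Matrix.one_apply] <;>
    (ring_nf; (try simp only [hω6, hω5, hω4, hω3, hω2]); (try ring))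

lemma hQP : Q * P = 1 := by
  ext i j
  fin_cases i <;> fin_cases j <;>
    simp [P, Q, Matrix.mul_apply, Fin.sum_univ_three, Matrix.one_apply] <;>
    (ring_nf; (try simp only [hω6, hω5, hω4, hω3, hω2]); (try ring))

set_option maxHeartbeats 1000000 in
theorem exp_circulant_is_circulant (a b c t : ℂ) :
    NormedSpace.exp (t • Dm a b c) = Dm (af a b c t) (bf a b c t) (cf a b c t) := by
  have hUnit : IsUnit P := ⟨⟨P, Q, hPQ, hQP⟩, rfl⟩
  have hPinv : P⁻¹ = Q := Matrix.inv_eq_right_inv hPQ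
  set d : Fin 3 → ℂ :=
    ![t * (a + b + c), t * (a + b * ω + c * ω ^ 2), t * (a + b * ω ^ 2 + c * ω)] with hd
  have hdecomp : t • Dm a b c = P * diagonal d * P⁻¹ := by
    rw [hPinv]
    ext i j
    fin_cases i <;> fin_cases j <;>
      simp [P, Q, Dm, hd, Matrix.mul_apply, Fin.sum_univ_three, Matrix.diagonal_apply, Matrix.vecMul_diagonal] <;>
      (ring_nf; (try simp only [hω6, hω5, hω4, hω3, hω2]); (try ring))
  rw [hdecomp]
  rw [Matrix.exp_conj P (diagonal d) hUnit]
  rw [Matrix.exp_diagonal, hPinv]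
  have he : NormedSpace.exp d = fun i => Complex.exp (d i) := by
    funext i
    rw [Pi.exp_def]
    simp [Complex.exp_eq_exp_ℂ]
  rw [he]
  ext i j
  fin_cases i <;> fin_cases j <;>
    simp [P, Q, Dm, af, bf, cf, hd, Matrix.mul_apply, Fin.sum_univ_three, Matrix.diagonal_apply, Matrix.vecMul_diagonal] <;>
    (ring_nf; (try simp only [hω6, hω5, hω4, hω3, hω2]); (try ring))
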